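/- arXiv:2105.09339 — 4 statements merged into one kernel-verified Lean document; each statement's English description precedes it below -/
import Mathlib

section
/- Consider the coupled linear system: given (u,p) in V × Q (V, Q finite-dimensional real inner product spaces), find (w,r) ∈ V × Q such that ν⟪w,v⟫ + b(u,w,v) - ⟪r, D v⟫ = f(v) and ε⟪r,q⟫ + ⟪D w, q⟫ = ε⟪p,q⟫ for all (v,q) ∈ V × Q, where D : V → Q is linear, ν, ε > 0, and b(u,v,v) = 0. Then this system has at most one solution (w,r). -/
open RealInnerProductSpace

theorem ipp_step_uniqueness
    {V Q : Type*} [NormedAddCommGroup V] [InnerProductSpace ℝ V] [FiniteDimensional ℝ V]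
    [NormedAddCommGroup Q] [InnerProductSpace ℝ Q] [FiniteDimensional ℝ Q]
    (D : V →ₗ[ℝ] Q)
    (b : V →ₗ[ℝ] V →ₗ[ℝ] V →ₗ[ℝ] ℝ) (hskew : ∀ u v : V, b u v v = 0)
    (ν ε : ℝ) (hν : 0 < ν) (hε : 0 < ε)
    (f : V →L[ℝ] ℝ) (u : V) (p : Q)
    (w₁ w₂ : V) (r₁ r₂ : Q)
    (h1 : ∀ v : V, ν * ⟪w₁, v⟫ + b u w₁ v - ⟪r₁, D v⟫ = f v)
    (h1' : ∀ q : Q, ε * ⟪r₁, q⟫ + ⟪D w₁, q⟫ = ε * ⟪p, q⟫)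
    (h2 : ∀ v : V, ν * ⟪w₂, v⟫ + b u w₂ v - ⟪r₂, D v⟫ = f v)
    (h2' : ∀ q : Q, ε * ⟪r₂, q⟫ + ⟪D w₂, q⟫ = ε * ⟪p, q⟫) :
    w₁ = w₂ ∧ r₁ = r₂ := by
  set w : V := w₁ - w₂ with hw
  set r : Q := r₁ - r₂ with hr
  have hbsub : b u w₁ w - b u w₂ w = b u w w := by
    rw [hw, map_sub]; simp
  have hb0 : b u w w = 0 := hskew u w
  have e1 : ν * ⟪w, w⟫ - ⟪r, D w⟫ = 0 := by
    have a := h1 w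
    have c := h2 w
    have hi : ⟪w₁, w⟫ - ⟪w₂, w⟫ = ⟪w, w⟫ := (inner_sub_left _ _ _).symm
    have hi2 : ⟪r₁, D w⟫ - ⟪r₂, D w⟫ = ⟪r, D w⟫ := (inner_sub_left _ _ _).symm
    nlinarith [a, c, hi, hi2, hbsub, hb0]
  have e2 : ε * ⟪r, r⟫ + ⟪D w, r⟫ = 0 := by
    have a := h1' r
    have c := h2' r
    have hi : ⟪r₁, r⟫ - ⟪r₂, r⟫ = ⟪r, r⟫ := (inner_sub_left _ _ _).symm
    have hi2 : ⟪D w₁, r⟫ - ⟪D w₂, r⟫ = ⟪D w, r⟫ := by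
      rw [hw, map_sub, inner_sub_left]
    nlinarith [a, c, hi, hi2]
  have hc : ⟪r, D w⟫ = ⟪D w, r⟫ := real_inner_comm _ _
  have hsum : ν * ⟪w, w⟫ + ε * ⟪r, r⟫ = 0 := by linarith
  have hw0 : (0:ℝ) ≤ ⟪w, w⟫ := real_inner_self_nonneg
  have hr0 : (0:ℝ) ≤ ⟪r, r⟫ := real_inner_self_nonneg
  have hww : ⟪w, w⟫ = 0 := by nlinarith
  have hrr : ⟪r, r⟫ = 0 := by nlinarith
  constructor
  · have : w = 0 := by
      rwa [← @inner_self_eq_zero ℝ]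
    exact sub_eq_zero.mp this
  · have : r = 0 := by
      rwa [← @inner_self_eq_zero ℝ]
    exact sub_eq_zero.mp this
end

section
/- In the setting of the iterated penalty Picard step operator G(u,p) = (G₁(u,p), G₂(u,p)) solving ν⟪G₁,v⟫ + b(u,G₁,v) - ⟪G₂, Dv⟫ = f(v), ε⟪G₂,q⟫ + ⟪DG₁,q⟫ = ε⟪p,q⟫, the solution satisfies the energy bound ν‖G₁(u,p)‖² + ε‖G₂(u,p)‖² ≤ ε‖p‖² + ν⁻¹‖f‖_{V*}². -/
open RealInnerProductSpace

theorem ipp_step_energy_bound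
    {V Q : Type*} [NormedAddCommGroup V] [InnerProductSpace ℝ V] [FiniteDimensional ℝ V]
    [NormedAddCommGroup Q] [InnerProductSpace ℝ Q] [FiniteDimensional ℝ Q]
    (D : V →ₗ[ℝ] Q)
    (b : V →ₗ[ℝ] V →ₗ[ℝ] V →ₗ[ℝ] ℝ) (hskew : ∀ u v : V, b u v v = 0)
    (ν ε : ℝ) (hν : 0 < ν) (hε : 0 < ε)
    (f : V →L[ℝ] ℝ) (u : V) (p : Q)
    (G₁ : V) (G₂ : Q)
    (hG1 : ∀ v : V, ν * ⟪G₁, v⟫ + b u G₁ v - ⟪G₂, D v⟫ = f v)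
    (hG2 : ∀ q : Q, ε * ⟪G₂, q⟫ + ⟪D G₁, q⟫ = ε * ⟪p, q⟫) :
    ν * ‖G₁‖ ^ 2 + ε * ‖G₂‖ ^ 2 ≤ ε * ‖p‖ ^ 2 + ν⁻¹ * ‖f‖ ^ 2 := by
  have h1 := hG1 G₁
  rw [hskew u G₁] at h1
  have h2 := hG2 G₂
  rw [real_inner_self_eq_norm_sq] at h1 h2
  rw [real_inner_comm (D G₁) G₂] at h1
  have hsum : ν * ‖G₁‖ ^ 2 + ε * ‖G₂‖ ^ 2 = f G₁ + ε * ⟪p, G₂⟫ := by linarith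
  have hf : f G₁ ≤ ‖f‖ * ‖G₁‖ :=
    (le_abs_self _).trans (f.le_opNorm G₁)
  have hp : ⟪p, G₂⟫ ≤ ‖p‖ * ‖G₂‖ := real_inner_le_norm p G₂
  have hfn : 0 ≤ ‖f‖ := norm_nonneg _
  have hinv : ν⁻¹ * ν = 1 := inv_mul_cancel₀ hν.ne'
  have hyoung : ‖f‖ * ‖G₁‖ ≤ ν / 2 * ‖G₁‖ ^ 2 + ν⁻¹ / 2 * ‖f‖ ^ 2 := by
    have h := mul_nonneg (inv_nonneg.2 hν.le) (sq_nonneg (ν * ‖G₁‖ - ‖f‖))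
    nlinarith [h, hinv]
  nlinarith [sq_nonneg (‖p‖ - ‖G₂‖), mul_le_mul_of_nonneg_left hp hε.le, hyoung]
end

section
/- The IPP operator G is Lipschitz continuous: for all (u,p), (w,z) in V × Q, ‖G(u,p) - G(w,z)‖_X ≤ C_L ‖(u,p) - (w,z)‖_X with C_L = max{1, κ + √(ε/ν³)·M‖p‖}, where κ = Mν⁻²‖f‖_{V*}. -/
open RealInnerProductSpace

lemma cs2 (a b c d : ℝ) :
    a*c + b*d ≤ Real.sqrt (a^2+b^2) * Real.sqrt (c^2+d^2) := by
  have h1 : Real.sqrt (a^2+b^2) ^ 2 = a^2+b^2 := Real.sq_sqrt (by positivity)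
  have h2 : Real.sqrt (c^2+d^2) ^ 2 = c^2+d^2 := Real.sq_sqrt (by positivity)
  have h3 : 0 ≤ Real.sqrt (a^2+b^2) := Real.sqrt_nonneg _
  have h4 : 0 ≤ Real.sqrt (c^2+d^2) := Real.sqrt_nonneg _
  nlinarith [sq_nonneg (a*d - b*c), mul_nonneg h3 h4]

set_option maxHeartbeats 1000000 in
theorem ipp_operator_lipschitz
    {V Q : Type*} [NormedAddCommGroup V] [InnerProductSpace ℝ V] [FiniteDimensional ℝ V]
    [NormedAddCommGroup Q] [InnerProductSpace ℝ Q] [FiniteDimensional ℝ Q]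
    (D : V →ₗ[ℝ] Q)
    (b : V →ₗ[ℝ] V →ₗ[ℝ] V →ₗ[ℝ] ℝ)
    (hskew : ∀ u v : V, b u v v = 0)
    (M : ℝ) (hbM : ∀ u v w : V, |b u v w| ≤ M * ‖u‖ * ‖v‖ * ‖w‖)
    (ν ε : ℝ) (hν : 0 < ν) (hε : 0 < ε)
    (f : V →L[ℝ] ℝ)
    (κ : ℝ) (hκdef : κ = M * ν⁻¹ ^ 2 * ‖f‖)
    (u : V) (p : Q) (w : V) (z : Q)
    (Gu₁ : V) (Gu₂ : Q) (Gw₁ : V) (Gw₂ : Q)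
    (hGu1 : ∀ v : V, ν * ⟪Gu₁, v⟫ + b u Gu₁ v - ⟪Gu₂, D v⟫ = f v)
    (hGu2 : ∀ q : Q, ε * ⟪Gu₂, q⟫ + ⟪D Gu₁, q⟫ = ε * ⟪p, q⟫)
    (hGw1 : ∀ v : V, ν * ⟪Gw₁, v⟫ + b w Gw₁ v - ⟪Gw₂, D v⟫ = f v)
    (hGw2 : ∀ q : Q, ε * ⟪Gw₂, q⟫ + ⟪D Gw₁, q⟫ = ε * ⟪z, q⟫) :
    Real.sqrt (ν * ‖Gu₁ - Gw₁‖ ^ 2 + ε * ‖Gu₂ - Gw₂‖ ^ 2) ≤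
      max 1 (κ + Real.sqrt (ε / ν ^ 3) * M * ‖p‖) *
        Real.sqrt (ν * ‖u - w‖ ^ 2 + ε * ‖p - z‖ ^ 2) := by
  set a1 := ‖Gu₁ - Gw₁‖ with ha1
  set a2 := ‖Gu₂ - Gw₂‖ with ha2
  set d1 := ‖u - w‖ with hd1
  set d2 := ‖p - z‖ with hd2
  set g := ‖Gu₁‖ with hg
  set h := ‖Gu₂‖ with hh
  set F := ‖f‖ with hF
  set P := ‖p‖ with hP
  -- energy identity for the difference
  have keyA : ν * a1 ^ 2 + ε * a2 ^ 2
      = -(b (u - w) Gu₁ (Gu₁ - Gw₁)) + ε * ⟪p - z, Gu₂ - Gw₂⟫ := by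
    have h1 := hGu1 (Gu₁ - Gw₁)
    have h2 := hGw1 (Gu₁ - Gw₁)
    have h3 := hGu2 (Gu₂ - Gw₂)
    have h4 := hGw2 (Gu₂ - Gw₂)
    have hb0 := hskew w (Gu₁ - Gw₁)
    have hc1 : ⟪D Gu₁, Gu₂⟫ = ⟪Gu₂, D Gu₁⟫ := real_inner_comm _ _
    have hc2 : ⟪D Gw₁, Gu₂⟫ = ⟪Gu₂, D Gw₁⟫ := real_inner_comm _ _
    have hc3 : ⟪D Gu₁, Gw₂⟫ = ⟪Gw₂, D Gu₁⟫ := real_inner_comm _ _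
    have hc4 : ⟪D Gw₁, Gw₂⟫ = ⟪Gw₂, D Gw₁⟫ := real_inner_comm _ _
    have hn1 : ⟪Gu₁ - Gw₁, Gu₁ - Gw₁⟫ = a1 ^ 2 := real_inner_self_eq_norm_sq _
    have hn2 : ⟪Gu₂ - Gw₂, Gu₂ - Gw₂⟫ = a2 ^ 2 := real_inner_self_eq_norm_sq _
    rw [← hn1, ← hn2]
    simp only [map_sub, LinearMap.sub_apply, inner_sub_left, inner_sub_right,
      ContinuousLinearMap.map_sub] at h1 h2 h3 h4 hb0 hc1 hc2 hc3 hc4 ⊢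
    linarith
  -- energy identity for G(u,p)
  have keyB : ν * g ^ 2 + ε * h ^ 2 = f Gu₁ + ε * ⟪p, Gu₂⟫ := by
    have h1 := hGu1 Gu₁
    have h3 := hGu2 Gu₂
    have hb0 := hskew u Gu₁
    have hc1 : ⟪D Gu₁, Gu₂⟫ = ⟪Gu₂, D Gu₁⟫ := real_inner_comm _ _
    have hn1 : ⟪Gu₁, Gu₁⟫ = g ^ 2 := real_inner_self_eq_norm_sq _
    have hn2 : ⟪Gu₂, Gu₂⟫ = h ^ 2 := real_inner_self_eq_norm_sq _
    rw [← hn1, ← hn2]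
    linarith
  -- bound on g
  have hsν : Real.sqrt (ε * ν) ^ 2 = ε * ν := Real.sq_sqrt (by positivity)
  set s := Real.sqrt (ε * ν) with hs
  have hs0 : 0 ≤ s := Real.sqrt_nonneg _
  have hgb : ν * g ≤ F + s * P := by
    have hfb : f Gu₁ ≤ F * g := by
      calc f Gu₁ ≤ |f Gu₁| := le_abs_self _
        _ = ‖f Gu₁‖ := (Real.norm_eq_abs _).symm
        _ ≤ F * g := f.le_opNorm Gu₁
    have hpb : ⟪p, Gu₂⟫ ≤ P * h := real_inner_le_norm _ _
    have hB : ν * g ^ 2 + ε * h ^ 2 ≤ F * g + ε * (P * h) := by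
      rw [keyB]; gcongr -- maybe fails; fallback nlinarith
    have hg0 : 0 ≤ g := norm_nonneg _
    have hh0 : 0 ≤ h := norm_nonneg _
    have hF0 : 0 ≤ F := norm_nonneg _
    have hP0 : 0 ≤ P := norm_nonneg _
    have key : (ν*g)^2 ≤ F*(ν*g) + s^2*P^2/4 := by
      rw [hsν]
      nlinarith [mul_le_mul_of_nonneg_left hB hν.le,
        mul_nonneg (mul_nonneg hε.le hν.le) (sq_nonneg (2*h - P))]
    by_contra hcon
    push_neg at hcon
    have hx0 : (0:ℝ) ≤ ν * g := mul_nonneg hν.le hg0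
    have hsP0 : (0:ℝ) ≤ s * P := mul_nonneg hs0 hP0
    have hA := mul_le_mul_of_nonneg_right hcon.le hx0
    have hBp := mul_le_mul_of_nonneg_right hcon.le hsP0
    have hC := mul_le_mul_of_nonneg_right hcon.le hF0
    have hD := mul_pos (sub_pos.2 hcon) (sub_pos.2 hcon)
    nlinarith [hA, hBp, hC, hD, key, mul_nonneg hF0 hsP0, sq_nonneg (s*P)]
  -- sqrt(ε/ν³) = s·ν⁻²
  have hsq' : Real.sqrt (ε / ν ^ 3) = s * (ν⁻¹) ^ 2 := by
    rw [show ε / ν ^ 3 = (ε * ν) * ((ν⁻¹ : ℝ) ^ 2) ^ 2 by field_simp,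
      Real.sqrt_mul (by positivity), Real.sqrt_sq (by positivity), hs]
  set C := max 1 (κ + Real.sqrt (ε / ν ^ 3) * M * P) with hC
  have hC1 : (1:ℝ) ≤ C := le_max_left _ _
  have hC0 : (0:ℝ) ≤ C := le_trans zero_le_one hC1
  have hC2 : κ + s * (ν⁻¹) ^ 2 * M * P ≤ C := by
    calc κ + s * (ν⁻¹) ^ 2 * M * P = κ + Real.sqrt (ε / ν ^ 3) * M * P := by rw [hsq']
      _ ≤ C := le_max_right _ _
  -- energy bound for the difference
  have hbound : ν * a1 ^ 2 + ε * a2 ^ 2 ≤ M * d1 * g * a1 + ε * (d2 * a2) := by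
    have hb1 : -(b (u - w) Gu₁ (Gu₁ - Gw₁)) ≤ M * d1 * g * a1 := by
      calc -(b (u - w) Gu₁ (Gu₁ - Gw₁)) ≤ |b (u - w) Gu₁ (Gu₁ - Gw₁)| := neg_le_abs _
        _ ≤ M * ‖u - w‖ * ‖Gu₁‖ * ‖Gu₁ - Gw₁‖ := hbM _ _ _
        _ = M * d1 * g * a1 := rfl
    have hb2 : ⟪p - z, Gu₂ - Gw₂⟫ ≤ d2 * a2 := real_inner_le_norm _ _
    have := mul_le_mul_of_nonneg_left hb2 hε.le
    linarith [keyA]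
  have hd10 : 0 ≤ d1 := norm_nonneg _
  have ha10 : 0 ≤ a1 := norm_nonneg _
  have hd20 : 0 ≤ d2 := norm_nonneg _
  have ha20 : 0 ≤ a2 := norm_nonneg _
  have hg0 : 0 ≤ g := norm_nonneg _
  -- step: absorb into C
  have hstep : M * d1 * g * a1 + ε * (d2 * a2) ≤ C * (ν * (d1 * a1) + ε * (d2 * a2)) := by
    have hB2 : ε * (d2 * a2) ≤ C * (ε * (d2 * a2)) :=
      le_mul_of_one_le_left (by positivity) hC1
    rcases le_or_gt 0 M with hM | hM
    · have hMg : M * d1 * g * a1 ≤ (κ + s * (ν⁻¹) ^ 2 * M * P) * (ν * (d1 * a1)) := by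
        refine le_of_mul_le_mul_right ?_ hν
        calc M * d1 * g * a1 * ν = M * (d1 * a1) * (ν * g) := by ring
          _ ≤ M * (d1 * a1) * (F + s * P) :=
              mul_le_mul_of_nonneg_left hgb (by positivity)
          _ = (κ + s * (ν⁻¹) ^ 2 * M * P) * (ν * (d1 * a1)) * ν := by
              rw [hκdef]; field_simp
      have hMg2 : (κ + s * (ν⁻¹) ^ 2 * M * P) * (ν * (d1 * a1)) ≤ C * (ν * (d1 * a1)) :=
        mul_le_mul_of_nonneg_right hC2 (by positivity)
      nlinarith [hMg, hMg2, hB2]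
    · have : M * d1 * g * a1 ≤ 0 := by
        have : 0 ≤ d1 * g * a1 := by positivity
        nlinarith
      have h0 : 0 ≤ C * (ν * (d1 * a1)) := by positivity
      nlinarith [hB2]
  -- Cauchy-Schwarz step
  set X := Real.sqrt (ν * a1 ^ 2 + ε * a2 ^ 2) with hX
  set Y := Real.sqrt (ν * d1 ^ 2 + ε * d2 ^ 2) with hY
  have hX2 : X ^ 2 = ν * a1 ^ 2 + ε * a2 ^ 2 := Real.sq_sqrt (by positivity)
  have hνs : Real.sqrt ν ^ 2 = ν := Real.sq_sqrt hν.le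
  have hεs : Real.sqrt ε ^ 2 = ε := Real.sq_sqrt hε.le
  have hcs : ν * (d1 * a1) + ε * (d2 * a2) ≤ Y * X := by
    have h := cs2 (Real.sqrt ν * d1) (Real.sqrt ε * d2) (Real.sqrt ν * a1) (Real.sqrt ε * a2)
    have e1 : (Real.sqrt ν * d1) ^ 2 + (Real.sqrt ε * d2) ^ 2 = ν * d1 ^ 2 + ε * d2 ^ 2 := by
      rw [mul_pow, mul_pow, hνs, hεs]
    have e2 : (Real.sqrt ν * a1) ^ 2 + (Real.sqrt ε * a2) ^ 2 = ν * a1 ^ 2 + ε * a2 ^ 2 := by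
      rw [mul_pow, mul_pow, hνs, hεs]
    rw [e1, e2] at h
    calc ν * (d1 * a1) + ε * (d2 * a2)
        = Real.sqrt ν * d1 * (Real.sqrt ν * a1) + Real.sqrt ε * d2 * (Real.sqrt ε * a2) := by
          linear_combination (-(d1 * a1)) * hνs + (-(d2 * a2)) * hεs
      _ ≤ Y * X := h
  have hfin : X * X ≤ C * Y * X := by
    have h1 : X ^ 2 ≤ C * (Y * X) := by
      calc X ^ 2 = ν * a1 ^ 2 + ε * a2 ^ 2 := hX2
        _ ≤ M * d1 * g * a1 + ε * (d2 * a2) := hbound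
        _ ≤ C * (ν * (d1 * a1) + ε * (d2 * a2)) := hstep
        _ ≤ C * (Y * X) := mul_le_mul_of_nonneg_left hcs hC0
    nlinarith [h1]
  have hXnn : 0 ≤ X := Real.sqrt_nonneg _
  rcases hXnn.eq_or_lt with h0 | hXpos
  · rw [← h0]
    exact mul_nonneg hC0 (Real.sqrt_nonneg _)
  · exact le_of_mul_le_mul_right hfin hXpos
end

section
/- Given (u,p), define the linear operator G'(u,p;·,·) : V × Q → V × Q by the system ν⟪G₁'(u,p;h,s),v⟫ + b(h, G₁(u,p), v) + b(u, G₁'(u,p;h,s), v) - ⟪G₂'(u,p;h,s), Dv⟫ = 0 and ε⟪G₂'(u,p;h,s),q⟫ + ⟪DG₁'(u,p;h,s), q⟫ = ε⟪s,q⟫ for all (v,q). Then G' is well-defined and bounded: ‖G'(u,p;h,s)‖_X ≤ C_L ‖(h,s)‖_X with C_L = max{1, κ + √(ε/ν³)M‖p‖}. -/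
open RealInnerProductSpace

noncomputable def rieszAux {V : Type*} [NormedAddCommGroup V] [InnerProductSpace ℝ V]
    [FiniteDimensional ℝ V] : (V →ₗ[ℝ] ℝ) →ₗ[ℝ] V where
  toFun φ := LinearMap.adjoint φ 1
  map_add' φ ψ := by simp
  map_smul' c φ := by simp

@[simp] theorem rieszAux_inner {V : Type*} [NormedAddCommGroup V] [InnerProductSpace ℝ V]
    [FiniteDimensional ℝ V] (φ : V →ₗ[ℝ] ℝ) (v : V) : ⟪rieszAux φ, v⟫ = φ v := by
  simp [rieszAux, LinearMap.adjoint_inner_left, RCLike.inner_apply]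

noncomputable def opA {V Q : Type*} [NormedAddCommGroup V] [InnerProductSpace ℝ V]
    [FiniteDimensional ℝ V] [NormedAddCommGroup Q] [InnerProductSpace ℝ Q]
    [FiniteDimensional ℝ Q]
    (D : V →ₗ[ℝ] Q) (b : V →ₗ[ℝ] V →ₗ[ℝ] V →ₗ[ℝ] ℝ) (ν ε : ℝ) (u : V) :
    (V × Q) →ₗ[ℝ] (V × Q) where
  toFun z := (ν • z.1 + rieszAux (b u z.1) - LinearMap.adjoint D z.2, ε • z.2 + D z.1)
  map_add' x y := by
    ext <;> simp [smul_add] <;> abel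
  map_smul' c x := by
    ext <;> simp [smul_add, smul_sub, smul_comm c]

@[simp] theorem opA_apply {V Q : Type*} [NormedAddCommGroup V] [InnerProductSpace ℝ V]
    [FiniteDimensional ℝ V] [NormedAddCommGroup Q] [InnerProductSpace ℝ Q]
    [FiniteDimensional ℝ Q]
    (D : V →ₗ[ℝ] Q) (b : V →ₗ[ℝ] V →ₗ[ℝ] V →ₗ[ℝ] ℝ) (ν ε : ℝ) (u : V) (z : V × Q) :
    opA D b ν ε u z
      = (ν • z.1 + rieszAux (b u z.1) - LinearMap.adjoint D z.2, ε • z.2 + D z.1) := rfl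

set_option maxHeartbeats 2000000 in
theorem ipp_derivative_wellposed_and_bounded
    {V Q : Type*} [NormedAddCommGroup V] [InnerProductSpace ℝ V] [FiniteDimensional ℝ V]
    [NormedAddCommGroup Q] [InnerProductSpace ℝ Q] [FiniteDimensional ℝ Q]
    (D : V →ₗ[ℝ] Q)
    (b : V →ₗ[ℝ] V →ₗ[ℝ] V →ₗ[ℝ] ℝ)
    (hskew : ∀ u v : V, b u v v = 0)
    (M : ℝ) (hbM : ∀ u v w : V, |b u v w| ≤ M * ‖u‖ * ‖v‖ * ‖w‖)
    (ν ε : ℝ) (hν : 0 < ν) (hε : 0 < ε)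
    (f : V →L[ℝ] ℝ)
    (κ : ℝ) (hκdef : κ = M * ν⁻¹ ^ 2 * ‖f‖)
    (u : V) (p : Q)
    (G₁up : V) (hG₁bd : ‖G₁up‖ ≤ ν⁻¹ * ‖f‖ + Real.sqrt (ε / ν) * ‖p‖)
    (h : V) (s : Q) :
    (∃! gg : V × Q,
      (∀ v : V, ν * ⟪gg.1, v⟫ + b h G₁up v + b u gg.1 v - ⟪gg.2, D v⟫ = 0) ∧
      (∀ q : Q, ε * ⟪gg.2, q⟫ + ⟪D gg.1, q⟫ = ε * ⟪s, q⟫)) ∧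
    (∀ g₁ : V, ∀ g₂ : Q,
      (∀ v : V, ν * ⟪g₁, v⟫ + b h G₁up v + b u g₁ v - ⟪g₂, D v⟫ = 0) →
      (∀ q : Q, ε * ⟪g₂, q⟫ + ⟪D g₁, q⟫ = ε * ⟪s, q⟫) →
      Real.sqrt (ν * ‖g₁‖ ^ 2 + ε * ‖g₂‖ ^ 2) ≤
        max 1 (κ + Real.sqrt (ε / ν ^ 3) * M * ‖p‖) *
          Real.sqrt (ν * ‖h‖ ^ 2 + ε * ‖s‖ ^ 2)) := by
  -- the linear operator encoding the homogeneous part of the system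
  have hAapp : ∀ z : V × Q,
      opA D b ν ε u z
        = (ν • z.1 + rieszAux (b u z.1) - LinearMap.adjoint D z.2, ε • z.2 + D z.1) :=
    opA_apply D b ν ε u
  -- injectivity
  have hinj : Function.Injective (opA D b ν ε u) := by
    rw [← LinearMap.ker_eq_bot, LinearMap.ker_eq_bot']
    intro z hz
    rw [hAapp] at hz
    have h1 : ⟪(ν • z.1 + rieszAux (b u z.1) - LinearMap.adjoint D z.2 : V), z.1⟫ = 0 := by
      rw [show (ν • z.1 + rieszAux (b u z.1) - LinearMap.adjoint D z.2 : V) = 0 from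
        congrArg Prod.fst hz]
      simp
    have h2 : ⟪(ε • z.2 + D z.1 : Q), z.2⟫ = 0 := by
      rw [show (ε • z.2 + D z.1 : Q) = 0 from congrArg Prod.snd hz]
      simp
    simp only [inner_add_left, inner_sub_left, real_inner_smul_left, rieszAux_inner,
      LinearMap.adjoint_inner_left, real_inner_self_eq_norm_sq, hskew] at h1 h2
    have hio : ⟪z.2, D z.1⟫ = ⟪D z.1, z.2⟫ := real_inner_comm _ _
    have hz1 : ‖z.1‖ ^ 2 = 0 ∧ ‖z.2‖ ^ 2 = 0 := by
      constructor <;> nlinarith [sq_nonneg ‖z.1‖, sq_nonneg ‖z.2‖]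
    have : z.1 = 0 := by
      have := pow_eq_zero_iff (n := 2) (by norm_num) |>.mp hz1.1
      simpa using this
    have h2' : z.2 = 0 := by
      have := pow_eq_zero_iff (n := 2) (by norm_num) |>.mp hz1.2
      simpa using this
    exact Prod.ext this h2'
  -- translation between the variational conditions and the linear equation
  have hiff : ∀ g₁ : V, ∀ g₂ : Q,
      ((∀ v : V, ν * ⟪g₁, v⟫ + b h G₁up v + b u g₁ v - ⟪g₂, D v⟫ = 0) ∧
       (∀ q : Q, ε * ⟪g₂, q⟫ + ⟪D g₁, q⟫ = ε * ⟪s, q⟫)) ↔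
      opA D b ν ε u (g₁, g₂) = (-(rieszAux (b h G₁up)), ε • s) := by
    intro g₁ g₂
    rw [hAapp, Prod.ext_iff]
    constructor
    · rintro ⟨hc1, hc2⟩
      constructor
      · apply ext_inner_right ℝ
        intro v
        have := hc1 v
        simp only [inner_add_left, inner_sub_left, inner_neg_left, real_inner_smul_left,
          rieszAux_inner, LinearMap.adjoint_inner_left]
        linarith
      · apply ext_inner_right ℝ
        intro q
        have := hc2 q
        simp only [inner_add_left, real_inner_smul_left]
        linarith
    · rintro ⟨hc1, hc2⟩
      constructor
      · intro v
        have := congrArg (fun x => ⟪x, v⟫) hc1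
        simp only [inner_add_left, inner_sub_left, inner_neg_left, real_inner_smul_left,
          rieszAux_inner, LinearMap.adjoint_inner_left] at this
        linarith
      · intro q
        have := congrArg (fun x => ⟪x, q⟫) hc2
        simp only [inner_add_left, real_inner_smul_left] at this
        linarith
  constructor
  · -- existence and uniqueness
    have hsurj : Function.Surjective (opA D b ν ε u) :=
      (LinearMap.injective_iff_surjective).mp hinj
    obtain ⟨gg, hgg⟩ := hsurj (-(rieszAux (b h G₁up)), ε • s)
    refine ⟨gg, (hiff gg.1 gg.2).mpr (by simpa using hgg), ?_⟩
    intro y hy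
    have hy' := (hiff y.1 y.2).mp (by simpa using hy)
    apply hinj
    simp only [hy']
    simpa using hgg.symm
  · -- the bound
    intro g₁ g₂ hc1 hc2
    -- energy identity
    have e1 := hc1 g₁
    have e2 := hc2 g₂
    rw [hskew] at e1
    rw [real_inner_self_eq_norm_sq] at e1
    rw [real_inner_self_eq_norm_sq] at e2
    have hio : ⟪g₂, D g₁⟫ = ⟪D g₁, g₂⟫ := real_inner_comm _ _
    have energy : ν * ‖g₁‖ ^ 2 + ε * ‖g₂‖ ^ 2 = -(b h G₁up g₁) + ε * ⟪s, g₂⟫ := by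
      linarith
    obtain ⟨K, hK⟩ : ∃ K : ℝ, K = κ + Real.sqrt (ε / ν ^ 3) * M * ‖p‖ := ⟨_, rfl⟩
    obtain ⟨C, hC⟩ : ∃ C : ℝ, C = max 1 K := ⟨_, rfl⟩
    rw [← hK, ← hC]
    have hC1 : (1 : ℝ) ≤ C := hC ▸ le_max_left _ _
    have hKC : K ≤ C := hC ▸ le_max_right _ _
    have hC0 : 0 < C := lt_of_lt_of_le one_pos hC1
    -- √(ε/ν³) * ν = √(ε/ν)
    have hsqid : Real.sqrt (ε / ν ^ 3) * ν = Real.sqrt (ε / ν) := by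
      rw [show Real.sqrt (ε / ν ^ 3) * ν = Real.sqrt ((ε / ν ^ 3) * ν ^ 2) by
        rw [Real.sqrt_mul (by positivity), Real.sqrt_sq hν.le]]
      congr 1
      field_simp
    -- bound on the trilinear term
    have hbb : |b h G₁up g₁| ≤ C * (ν * ‖h‖ * ‖g₁‖) := by
      rcases le_or_gt 0 M with hM | hM
      · have h1 : |b h G₁up g₁| ≤ M * ‖h‖ * ‖G₁up‖ * ‖g₁‖ := hbM h G₁up g₁
        have h2 : M * ‖h‖ * ‖G₁up‖ * ‖g₁‖ ≤
            M * ‖h‖ * (ν⁻¹ * ‖f‖ + Real.sqrt (ε / ν) * ‖p‖) * ‖g₁‖ := by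
          have : 0 ≤ M * ‖h‖ * ‖g₁‖ := by positivity
          nlinarith [norm_nonneg h, norm_nonneg g₁, norm_nonneg G₁up]
        have h3 : M * ‖h‖ * (ν⁻¹ * ‖f‖ + Real.sqrt (ε / ν) * ‖p‖) * ‖g₁‖ =
            K * (ν * ‖h‖ * ‖g₁‖) := by
          rw [hK, hκdef, ← hsqid]
          field_simp
        have h4 : K * (ν * ‖h‖ * ‖g₁‖) ≤ C * (ν * ‖h‖ * ‖g₁‖) := by
          have : (0:ℝ) ≤ ν * ‖h‖ * ‖g₁‖ := by positivity
          nlinarith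
        linarith
      · have h1 : |b h G₁up g₁| ≤ M * ‖h‖ * ‖G₁up‖ * ‖g₁‖ := hbM h G₁up g₁
        have h0 : 0 ≤ |b h G₁up g₁| := abs_nonneg _
        have hp : 0 ≤ ‖h‖ * ‖G₁up‖ * ‖g₁‖ := by positivity
        have : M * ‖h‖ * ‖G₁up‖ * ‖g₁‖ ≤ 0 := by nlinarith
        have hb0 : |b h G₁up g₁| ≤ 0 := by linarith
        have : (0:ℝ) ≤ C * (ν * ‖h‖ * ‖g₁‖) :=
          mul_nonneg hC0.le (by positivity)
        linarith
    -- abbreviations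
    obtain ⟨a, ha⟩ : ∃ a : ℝ, a = Real.sqrt (ν * ‖g₁‖ ^ 2 + ε * ‖g₂‖ ^ 2) := ⟨_, rfl⟩
    obtain ⟨B, hB⟩ : ∃ B : ℝ, B = Real.sqrt (ν * ‖h‖ ^ 2 + ε * ‖s‖ ^ 2) := ⟨_, rfl⟩
    rw [← ha, ← hB]
    have haP : (0:ℝ) ≤ ν * ‖g₁‖ ^ 2 + ε * ‖g₂‖ ^ 2 := by positivity
    have hBP : (0:ℝ) ≤ ν * ‖h‖ ^ 2 + ε * ‖s‖ ^ 2 := by positivity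
    have ha2 : a ^ 2 = ν * ‖g₁‖ ^ 2 + ε * ‖g₂‖ ^ 2 := ha ▸ Real.sq_sqrt haP
    have hB2 : B ^ 2 = ν * ‖h‖ ^ 2 + ε * ‖s‖ ^ 2 := hB ▸ Real.sq_sqrt hBP
    have ha0 : 0 ≤ a := ha ▸ Real.sqrt_nonneg _
    have hB0 : 0 ≤ B := hB ▸ Real.sqrt_nonneg _
    -- Cauchy–Schwarz in ℝ²
    have hcs : ν * ‖h‖ * ‖g₁‖ + ε * ‖s‖ * ‖g₂‖ ≤ B * a := by
      nlinarith [sq_nonneg (‖h‖ * ‖g₂‖ - ‖s‖ * ‖g₁‖), sq_nonneg (B * a),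
        mul_nonneg hB0 ha0, sq_nonneg (B - a), hν.le, hε.le,
        mul_pos hν hε, norm_nonneg h, norm_nonneg s, norm_nonneg g₁, norm_nonneg g₂]
    -- inner product bound
    have hsg : ε * ⟪s, g₂⟫ ≤ ε * (‖s‖ * ‖g₂‖) := by
      have := real_inner_le_norm s g₂
      nlinarith
    have hmain : a ^ 2 ≤ C * (B * a) := by
      rw [ha2]
      have hb' : -(b h G₁up g₁) ≤ C * (ν * ‖h‖ * ‖g₁‖) := by
        have := neg_abs_le (b h G₁up g₁)
        linarith
      have h5 : ε * (‖s‖ * ‖g₂‖) ≤ C * (ε * ‖s‖ * ‖g₂‖) := by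
        have h6 : (0:ℝ) ≤ ε * ‖s‖ * ‖g₂‖ := by positivity
        nlinarith
      calc ν * ‖g₁‖ ^ 2 + ε * ‖g₂‖ ^ 2 = -(b h G₁up g₁) + ε * ⟪s, g₂⟫ := energy
        _ ≤ C * (ν * ‖h‖ * ‖g₁‖) + C * (ε * ‖s‖ * ‖g₂‖) := by linarith
        _ = C * (ν * ‖h‖ * ‖g₁‖ + ε * ‖s‖ * ‖g₂‖) := by ring
        _ ≤ C * (B * a) := by nlinarith
    -- conclude
    rcases eq_or_lt_of_le ha0 with heq | hlt
    · rw [← heq]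
      exact mul_nonneg hC0.le hB0
    · have : a * a ≤ (C * B) * a := by nlinarith
      exact le_of_mul_le_mul_right this hlt
end
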